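/- Let G and G' be finite groups of equal order. A matrix U ∈ ℂ^{G×G'} is the transformation matrix of some (G,G')-invariant quantum Latin square if and only if: (1) U is unitary; (2) conj(U_{a,b}) = U_{a⁻¹,b⁻¹} for all a ∈ G and b ∈ G'; and (3) U_{ab,c} = ∑_{x,y∈G' with xy = c} U_{a,x}·U_{b,y} for all a,b ∈ G and c ∈ G'. -/

import Mathlib

open scoped BigOperators Classical ComplexOrder

/-- A `(G,G')`-invariant quantum Latin square with entries in `ℂ^{G'}`:
every row and every column forms an orthonormal basis, and the inner product
`⟨ψ_{a,b}, ψ_{c,d}⟩` depends only on `a⁻¹c ∈ G` and `b⁻¹d ∈ G'`. -/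
def IsInvQLS {G G' : Type*} [Group G] [Group G'] [Fintype G] [Fintype G']
    (ψ : G → G' → EuclideanSpace ℂ G') : Prop :=
  (∀ a : G, ∃ B : OrthonormalBasis G' ℂ (EuclideanSpace ℂ G'), ∀ b : G', B b = ψ a b) ∧
  (∀ b : G', ∃ B : OrthonormalBasis G ℂ (EuclideanSpace ℂ G'), ∀ a : G, B a = ψ a b) ∧
  (∀ (a c a' c' : G) (b d b' d' : G'),
    a⁻¹ * c = a'⁻¹ * c' → b⁻¹ * d = b'⁻¹ * d' →
    (inner ℂ (ψ a b) (ψ c d) : ℂ) = inner ℂ (ψ a' b') (ψ c' d'))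

/-- The transformation matrix of a `(G,G')`-invariant quantum Latin square:
`U_{x,y} = ⟨ψ_{a,b}, ψ_{c,d}⟩` for any `a,c ∈ G`, `b,d ∈ G'` with `a⁻¹c = x`, `b⁻¹d = y`
(here realized with `a = e`, `b = e`). -/
noncomputable def transMat {G G' : Type*} [Group G] [Group G'] [Fintype G']
    (ψ : G → G' → EuclideanSpace ℂ G') : Matrix G G' ℂ :=
  Matrix.of fun x y => (inner ℂ (ψ 1 1) (ψ x y) : ℂ)

/-- A `(G,G')`-transformation matrix: `U` is unitary, `conj U_{a,b} = U_{a⁻¹,b⁻¹}`, and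
`U_{ab,c} = ∑_{x y = c} U_{a,x} U_{b,y}`. -/
def IsTransMat {G G' : Type*} [Group G] [Group G'] [Fintype G] [Fintype G']
    [DecidableEq G] [DecidableEq G'] (U : Matrix G G' ℂ) : Prop :=
  (U * U.conjTranspose = 1 ∧ U.conjTranspose * U = 1) ∧
  (∀ (a : G) (b : G'), star (U a b) = U a⁻¹ b⁻¹) ∧
  (∀ (a b : G) (c : G'),
    U (a * b) c = ∑ x : G', ∑ y : G', if x * y = c then U a x * U b y else 0)

/-- An orthonormal family whose cardinality equals the dimension extends to an
orthonormal basis given by the family itself. -/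
lemma exists_onb_of_orthonormal {ι : Type*} [Fintype ι] [Nonempty ι]
    {E : Type*} [NormedAddCommGroup E] [InnerProductSpace ℂ E] [FiniteDimensional ℂ E]
    (v : ι → E) (hon : Orthonormal ℂ v)
    (hc : Fintype.card ι = Module.finrank ℂ E) :
    ∃ B : OrthonormalBasis ι ℂ E, ∀ i, B i = v i := by
  have hsp : ⊤ ≤ Submodule.span ℂ (Set.range v) := by
    rw [← Module.Basis.span_eq (basisOfLinearIndependentOfCardEqFinrank hon.linearIndependent hc),
      coe_basisOfLinearIndependentOfCardEqFinrank]
  exact ⟨OrthonormalBasis.mk hon hsp, fun i => by rw [OrthonormalBasis.coe_mk]⟩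

/-- A matrix `U ∈ ℂ^{G×G'}` is the transformation matrix of some
`(G,G')`-invariant quantum Latin square iff it is a `(G,G')`-transformation matrix,
i.e. (1) `U` is unitary; (2) `conj U_{a,b} = U_{a⁻¹,b⁻¹}`; (3) `U_{ab,c} = ∑_{xy=c} U_{a,x}U_{b,y}`. -/
theorem stmt8 {G G' : Type*} [Group G] [Group G'] [Fintype G] [Fintype G']
    [DecidableEq G] [DecidableEq G']
    (hcard : Fintype.card G = Fintype.card G') (U : Matrix G G' ℂ) :
    (∃ ψ : G → G' → EuclideanSpace ℂ G', IsInvQLS ψ ∧ transMat ψ = U) ↔ IsTransMat U := by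
  constructor
  · rintro ⟨ψ, ⟨hrow, hcol, hinv⟩, rfl⟩
    have ht : ∀ (x : G) (y : G'),
        transMat ψ x y = (inner ℂ (ψ 1 1) (ψ x y) : ℂ) := fun _ _ => rfl
    have hrowδ : ∀ (a : G) (b d : G'),
        (inner ℂ (ψ a b) (ψ a d) : ℂ) = if b = d then 1 else 0 := by
      intro a b d
      obtain ⟨B, hB⟩ := hrow a
      rw [← hB b, ← hB d]
      exact orthonormal_iff_ite.mp B.orthonormal b d
    have hcolδ : ∀ (b : G') (a c : G),
        (inner ℂ (ψ a b) (ψ c b) : ℂ) = if a = c then 1 else 0 := by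
      intro b a c
      obtain ⟨B, hB⟩ := hcol b
      rw [← hB a, ← hB c]
      exact orthonormal_iff_ite.mp B.orthonormal a c
    refine ⟨⟨?_, ?_⟩, ?_, ?_⟩
    · -- U Uᴴ = 1
      ext a c
      rw [Matrix.mul_apply, Matrix.one_apply]
      obtain ⟨B, hB⟩ := hrow a
      have step : ∀ b : G', transMat ψ a b * (transMat ψ).conjTranspose b c
          = (inner ℂ (ψ 1 1) (ψ a b) : ℂ) * inner ℂ (ψ a b) (ψ (a * c⁻¹) 1) := by
        intro b
        rw [Matrix.conjTranspose_apply, ht a b, ht c b]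
        congr 1
        rw [← starRingEnd_apply, inner_conj_symm]
        exact hinv c 1 a (a * c⁻¹) b 1 b 1 (by group) (by group)
      calc ∑ b : G', transMat ψ a b * (transMat ψ).conjTranspose b c
          = ∑ b : G', (inner ℂ (ψ 1 1) (B b) : ℂ) * inner ℂ (B b) (ψ (a * c⁻¹) 1) := by
            refine Finset.sum_congr rfl fun b _ => ?_
            rw [step b, hB b]
        _ = (inner ℂ (ψ 1 1) (ψ (a * c⁻¹) 1) : ℂ) := B.sum_inner_mul_inner _ _
        _ = if a = c then 1 else 0 := by
            rw [hcolδ 1 1 (a * c⁻¹)]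
            by_cases h : a = c
            · subst h; simp
            · rw [if_neg h, if_neg fun hh => h (mul_inv_eq_one.mp hh.symm)]
    · -- Uᴴ U = 1
      ext b d
      rw [Matrix.mul_apply, Matrix.one_apply]
      obtain ⟨B, hB⟩ := hcol d
      have step : ∀ a : G, (transMat ψ).conjTranspose b a * transMat ψ a d
          = (inner ℂ (ψ 1 1) (ψ a d) : ℂ) * inner ℂ (ψ a d) (ψ 1 (d * b⁻¹)) := by
        intro a
        rw [Matrix.conjTranspose_apply, ht a b, ht a d]
        rw [← starRingEnd_apply, inner_conj_symm]
        rw [hinv a 1 a 1 b 1 d (d * b⁻¹) (by group) (by group)]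
        ring
      calc ∑ a : G, (transMat ψ).conjTranspose b a * transMat ψ a d
          = ∑ a : G, (inner ℂ (ψ 1 1) (B a) : ℂ) * inner ℂ (B a) (ψ 1 (d * b⁻¹)) := by
            refine Finset.sum_congr rfl fun a _ => ?_
            rw [step a, hB a]
        _ = (inner ℂ (ψ 1 1) (ψ 1 (d * b⁻¹)) : ℂ) := B.sum_inner_mul_inner _ _
        _ = if b = d then 1 else 0 := by
            rw [hrowδ 1 1 (d * b⁻¹)]
            by_cases h : b = d
            · subst h; simp
            · rw [if_neg fun hh => h (mul_inv_eq_one.mp hh.symm).symm, if_neg h]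
    · -- star symmetry
      intro a b
      rw [ht a b, ht a⁻¹ b⁻¹, ← starRingEnd_apply, inner_conj_symm]
      exact hinv a 1 1 a⁻¹ b 1 1 b⁻¹ (by group) (by group)
    · -- convolution identity
      intro a b c
      obtain ⟨B, hB⟩ := hrow a
      have collapse : ∀ x : G',
          (∑ y : G', if x * y = c then transMat ψ a x * transMat ψ b y else 0)
            = transMat ψ a x * transMat ψ b (x⁻¹ * c) := by
        intro x
        rw [Finset.sum_eq_single (x⁻¹ * c)]
        · simp
        · intro y _ hy
          rw [if_neg fun h => hy (by rw [← h]; group)]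
        · intro h; exact absurd (Finset.mem_univ _) h
      rw [Finset.sum_congr rfl fun x _ => collapse x]
      calc transMat ψ (a * b) c
          = (inner ℂ (ψ 1 1) (ψ (a * b) c) : ℂ) := ht _ _
        _ = ∑ x : G', (inner ℂ (ψ 1 1) (B x) : ℂ) * inner ℂ (B x) (ψ (a * b) c) :=
            (B.sum_inner_mul_inner _ _).symm
        _ = ∑ x : G', transMat ψ a x * transMat ψ b (x⁻¹ * c) := by
            refine Finset.sum_congr rfl fun x _ => ?_
            rw [hB x, ht a x, ht b (x⁻¹ * c)]
            congr 1
            exact hinv a (a * b) 1 b x c 1 (x⁻¹ * c) (by group) (by group)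
  · rintro ⟨⟨h1, h2⟩, hstar, hmul⟩
    have hmul' : ∀ (p q : G) (r : G'), U (p * q) r = ∑ x : G', U p x * U q (x⁻¹ * r) := by
      intro p q r
      rw [hmul p q r]
      refine Finset.sum_congr rfl fun x _ => ?_
      rw [Finset.sum_eq_single (x⁻¹ * r)]
      · simp
      · intro y _ hy
        rw [if_neg fun h => hy (by rw [← h]; group)]
      · intro h; exact absurd (Finset.mem_univ _) h
    have hU11 : U 1 1 = 1 := by
      have e : (U * U.conjTranspose) 1 1 = (1 : Matrix G G ℂ) 1 1 := by rw [h1]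
      rw [Matrix.mul_apply, Matrix.one_apply_eq] at e
      have h0 := hmul' 1 1 1
      rw [one_mul] at h0
      rw [h0, ← e]
      refine Finset.sum_congr rfl fun x _ => ?_
      rw [Matrix.conjTranspose_apply, hstar, inv_one, mul_one]
    have hsumrow : ∑ b : G', Complex.normSq (U 1 b) = 1 := by
      have e : (U * U.conjTranspose) 1 1 = (1 : Matrix G G ℂ) 1 1 := by rw [h1]
      rw [Matrix.mul_apply, Matrix.one_apply_eq] at e
      rw [Finset.sum_congr rfl fun b _ => by
        rw [Matrix.conjTranspose_apply, ← starRingEnd_apply, Complex.mul_conj]] at e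
      exact_mod_cast e
    have hsumcol : ∑ a : G, Complex.normSq (U a 1) = 1 := by
      have e : (U.conjTranspose * U) 1 1 = (1 : Matrix G' G' ℂ) 1 1 := by rw [h2]
      rw [Matrix.mul_apply, Matrix.one_apply_eq] at e
      rw [Finset.sum_congr rfl fun a _ => by
        rw [Matrix.conjTranspose_apply, ← starRingEnd_apply, mul_comm, Complex.mul_conj]] at e
      exact_mod_cast e
    have hrow1 : ∀ b : G', U 1 b = if b = 1 then 1 else 0 := by
      intro b
      by_cases hb : b = 1
      · rw [if_pos hb, hb, hU11]
      · rw [if_neg hb]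
        have h0 : ∑ c ∈ Finset.univ.erase (1 : G'), Complex.normSq (U 1 c) = 0 := by
          have h := Finset.sum_erase_add Finset.univ
            (fun c => Complex.normSq (U 1 c)) (Finset.mem_univ (1 : G'))
          rw [hsumrow] at h
          simp only [hU11, Complex.normSq_one] at h
          linarith
        have := (Finset.sum_eq_zero_iff_of_nonneg
          (fun i _ => Complex.normSq_nonneg (U 1 i))).mp h0 b (Finset.mem_erase.mpr ⟨hb, Finset.mem_univ b⟩)
        exact Complex.normSq_eq_zero.mp this
    have hcol1 : ∀ a : G, U a 1 = if a = 1 then 1 else 0 := by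
      intro a
      by_cases ha : a = 1
      · rw [if_pos ha, ha, hU11]
      · rw [if_neg ha]
        have h0 : ∑ c ∈ Finset.univ.erase (1 : G), Complex.normSq (U c 1) = 0 := by
          have h := Finset.sum_erase_add Finset.univ
            (fun c => Complex.normSq (U c 1)) (Finset.mem_univ (1 : G))
          rw [hsumcol] at h
          simp only [hU11, Complex.normSq_one] at h
          linarith
        have := (Finset.sum_eq_zero_iff_of_nonneg
          (fun i _ => Complex.normSq_nonneg (U i 1))).mp h0 a (Finset.mem_erase.mpr ⟨ha, Finset.mem_univ a⟩)
        exact Complex.normSq_eq_zero.mp this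
    -- the quantum Latin square
    set ψ : G → G' → EuclideanSpace ℂ G' :=
      fun a b => (WithLp.equiv 2 (G' → ℂ)).symm (fun y => U a (y⁻¹ * b)) with hψ
    have comp : ∀ (a : G) (b : G') (y : G'), ψ a b y = U a (y⁻¹ * b) := fun _ _ _ => rfl
    have key : ∀ (a c : G) (b d : G'),
        (inner ℂ (ψ a b) (ψ c d) : ℂ) = U (a⁻¹ * c) (b⁻¹ * d) := by
      intro a c b d
      rw [hmul' a⁻¹ c (b⁻¹ * d), PiLp.inner_apply]
      refine Fintype.sum_equiv (Equiv.mulLeft b⁻¹) _ _ fun y => ?_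
      simp only [comp, RCLike.inner_apply, Equiv.coe_mulLeft, ← starRingEnd_apply] at hstar ⊢
      rw [hstar]
      rw [mul_comm]
      congr 1
      · congr 1; group
      · congr 1; group
    refine ⟨ψ, ⟨?_, ?_, ?_⟩, ?_⟩
    · -- rows are orthonormal bases
      intro a
      refine exists_onb_of_orthonormal (ψ a) ?_ (by rw [finrank_euclideanSpace])
      rw [orthonormal_iff_ite]
      intro b d
      rw [key a a b d, inv_mul_cancel, hrow1]
      by_cases h : b = d
      · subst h; simp
      · rw [if_neg fun hh => h (inv_mul_eq_one.mp hh), if_neg h]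
    · -- columns are orthonormal bases
      intro b
      refine exists_onb_of_orthonormal (fun a => ψ a b) ?_
        (by rw [finrank_euclideanSpace]; exact hcard)
      rw [orthonormal_iff_ite]
      intro a c
      rw [key a c b b, inv_mul_cancel, hcol1]
      by_cases h : a = c
      · subst h; simp
      · rw [if_neg fun hh => h (inv_mul_eq_one.mp hh), if_neg h]
    · -- invariance
      intro a c a' c' b d b' d' hg hg'
      rw [key a c b d, key a' c' b' d', hg, hg']
    · -- transformation matrix equals U
      ext x y
      show (inner ℂ (ψ 1 1) (ψ x y) : ℂ) = U x y
      rw [key 1 x 1 y]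
      simp
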